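/- Let σ be a permutation of {1,…,n} with m wheels. Then the set S(σ), consisting of all permutations of {1,…,n} whose one-line notation is obtained by concatenating the m wheels of σ (each wheel kept intact as a contiguous block, in some order), has exactly m! elements; i.e., distinct orderings of the wheels yield distinct permutations. -/

import Mathlib

lemma flatten_perm_of_perm {α : Type*} {l₁ l₂ : List (List α)} (h : l₁.Perm l₂) :
    l₁.flatten.Perm l₂.flatten := by
  induction h with
  | nil => exact List.Perm.refl _
  | cons x _ ih => simpa using ih.append_left x
  | swap x y l =>
      simp only [List.flatten_cons, ← List.append_assoc]
      exact (List.perm_append_comm).append_right _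
  | trans _ _ ih₁ ih₂ => exact ih₁.trans ih₂

lemma eq_of_perm_flatten_eq {α : Type*} : ∀ (L1 L2 : List (List α)), L1.Perm L2 →
    (∀ l ∈ L2, l ≠ []) → L1.flatten.Nodup → L1.flatten = L2.flatten → L1 = L2 := by
  intro L1
  induction L1 with
  | nil => intro L2 hp _ _ _; exact hp.nil_eq
  | cons a t1 ih =>
    intro L2 hp hne hnd hflat
    cases L2 with
    | nil => exact absurd hp.length_eq (by simp)
    | cons b t2 =>
      have hbne : b ≠ [] := hne b (List.mem_cons_self (a := b) (l := t2))
      have hane : a ≠ [] := hne a (hp.mem_iff.mp (List.mem_cons_self (a := a) (l := t1)))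
      have hflat' : a ++ t1.flatten = b ++ t2.flatten := by
        simpa [List.flatten_cons] using hflat
      have hab : a = b := by
        by_contra h
        have hbt : b ∈ t1 := by
          rcases List.mem_cons.mp (hp.mem_iff.mpr (List.mem_cons_self (a := b) (l := t2))) with h' | h'
          · exact absurd h'.symm h
          · exact h'
        have hxb : b.head hbne ∈ b := List.head_mem hbne
        have hx1 : b.head hbne ∈ t1.flatten :=
          List.mem_flatten.mpr ⟨b, hbt, hxb⟩
        have hheq : a.head? = b.head? := by
          have := congrArg List.head? hflat'
          rwa [List.head?_append_of_ne_nil _ hane, List.head?_append_of_ne_nil _ hbne] at this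
        have hxa : b.head hbne ∈ a := by
          have : a.head? = some (b.head hbne) := by
            rw [hheq, List.head?_eq_head]
          exact List.mem_of_mem_head? (by rw [this]; exact rfl)
        have hnd' : List.Nodup (a ++ t1.flatten) := by
          simpa [List.flatten_cons] using hnd
        exact (List.disjoint_of_nodup_append hnd') hxa hx1
      subst hab
      have hflat2 : t1.flatten = t2.flatten :=
        List.append_cancel_left hflat'
      have hp2 : t1.Perm t2 := hp.cons_inv
      have hnd2 : t1.flatten.Nodup := by
        have : List.Nodup (a ++ t1.flatten) := by
          simpa [List.flatten_cons] using hnd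
        exact (List.nodup_append.mp this).2.1
      have := ih t2 hp2 (fun l hl => hne l (List.mem_cons_of_mem _ hl)) hnd2 hflat2
      rw [this]

/-- Let σ be a permutation of {1,…,n} with m wheels `Ws 0, …, Ws (m-1)`
(nonempty contiguous blocks of the one-line notation whose concatenation, in order, is the
one-line notation of σ, and whose first entries are exactly the left-to-right maxima of σ).
Then the map sending an ordering ρ of the wheels to the permutation obtained by
concatenating the wheels in the order ρ is injective, so the set S(σ) of one-line notations
obtained by concatenating the m wheels in some order has exactly m! elements. -/
theorem stmt3 (n m : ℕ) (hn : 1 ≤ n) (σ : Equiv.Perm (Fin n))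
    (Ws : Fin m → List (Fin n))
    (hjoin : (List.ofFn Ws).flatten = List.ofFn (fun i => σ i))
    (hne : ∀ k, Ws k ≠ [])
    (hheads : ∀ k, ∀ x ∈ Ws k,
      ((∀ j, j < σ.symm x → σ j < x) ↔ (Ws k).head? = some x)) :
    Function.Injective
        (fun ρ : Equiv.Perm (Fin m) => (List.ofFn (fun k => Ws (ρ k))).flatten) ∧
      {l : List (Fin n) |
        ∃ ρ : Equiv.Perm (Fin m), l = (List.ofFn (fun k => Ws (ρ k))).flatten}.ncard
        = Nat.factorial m := by
  have hndσ : (List.ofFn (fun i => σ i)).Nodup := List.nodup_ofFn.mpr σ.injective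
  have hndW : (List.ofFn Ws).flatten.Nodup := hjoin ▸ hndσ
  -- Ws is injective
  have hWinj : Function.Injective Ws := by
    intro i j hij
    by_contra hij'
    obtain ⟨hnodups, hpw⟩ := List.nodup_flatten.mp hndW
    have hdisj : ∀ i j : Fin m, i ≠ j → (Ws i).Disjoint (Ws j) := by
      intro i j hne'
      have := (List.pairwise_ofFn).mp hpw
      rcases lt_or_gt_of_ne hne' with h | h
      · exact this h
      · exact (this h).symm
    have hx := List.head_mem (hne i)
    exact hdisj i j hij' hx (hij ▸ hx)
  set f := fun ρ : Equiv.Perm (Fin m) => (List.ofFn (fun k => Ws (ρ k))).flatten with hf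
  have hperm : ∀ ρ : Equiv.Perm (Fin m),
      (List.ofFn (fun k => Ws (ρ k))).Perm (List.ofFn Ws) :=
    fun ρ => ρ.ofFn_comp_perm Ws
  have hinj : Function.Injective f := by
    intro ρ₁ ρ₂ h
    have hp : (List.ofFn (fun k => Ws (ρ₁ k))).Perm (List.ofFn (fun k => Ws (ρ₂ k))) :=
      (hperm ρ₁).trans (hperm ρ₂).symm
    have hnd1 : (List.ofFn (fun k => Ws (ρ₁ k))).flatten.Nodup :=
      ((flatten_perm_of_perm (hperm ρ₁)).nodup_iff).mpr hndW
    have hne2 : ∀ l ∈ List.ofFn (fun k => Ws (ρ₂ k)), l ≠ [] := by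
      intro l hl
      obtain ⟨i, rfl⟩ := List.mem_ofFn.mp hl
      exact hne _
    have heq := eq_of_perm_flatten_eq _ _ hp hne2 hnd1 h
    have h2 : ∀ k, Ws (ρ₁ k) = Ws (ρ₂ k) := fun k =>
      congrFun (List.ofFn_injective heq) k
    ext k
    exact congrArg Fin.val (hWinj (h2 k))
  refine ⟨hinj, ?_⟩
  have hset : {l : List (Fin n) | ∃ ρ : Equiv.Perm (Fin m), l = f ρ} = Set.range f := by
    ext l; simp [Set.range, eq_comm]
  rw [hset, ← Nat.card_coe_set_eq, Nat.card_range_of_injective hinj,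
    Nat.card_eq_fintype_card, Fintype.card_perm, Fintype.card_fin]
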